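/- Let Φ be the root system of type A₂ with positive roots α₁, α₂, α₁+α₂, and set Δ₀ = {α₁, α₂, -(α₁+α₂)}. Then the three elements of Δ₀ sum to zero. Consequently, for any regular ξ (i.e. ξ with α(ξ) ≠ 0 for all α ∈ Φ) and any w in the Weyl group S₃, among the three values (wα)(ξ), α ∈ Δ₀, at least one is positive and at least one is negative; hence no function f : S₃ → ℝ can be strictly increasing along all edges (w, wσ_α) with (wα)(ξ) > 0 and also attain a minimum at a vertex all of whose outgoing edge labels are positive on ξ — i.e. there is no Morse function compatible with any ξ for this axial function. -/

import Mathlib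

/-- The orthogonal reflection of a Euclidean space in the hyperplane `α^⊥`. -/
noncomputable def sref {E : Type*} [NormedAddCommGroup E] [InnerProductSpace ℝ E]
    [FiniteDimensional ℝ E] (α : E) : E ≃ₗᵢ[ℝ] E :=
  Submodule.reflection (ℝ ∙ α)ᗮ

theorem sref_apply_two {E : Type*} [NormedAddCommGroup E] [InnerProductSpace ℝ E]
    [FiniteDimensional ℝ E] {v : E} (hv : (inner ℝ v v : ℝ) = 2) (x : E) :
    sref v x = x - (inner ℝ v x : ℝ) • v := by
  have hnorm : (‖v‖ : ℝ) ^ 2 = 2 := by rw [← real_inner_self_eq_norm_sq, hv]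
  show Submodule.reflection (ℝ ∙ v)ᗮ x = _
  rw [Submodule.reflection_apply, Submodule.starProjection_orthogonal_val,
      Submodule.starProjection_singleton, hnorm]
  push_cast
  module

/-- For the `A₂` root system (Gram data `⟨αᵢ,αᵢ⟩ = 2`, `⟨α₁,α₂⟩ = -1`) with
`Δ₀ = {α₁, α₂, -(α₁+α₂)}`: the three elements of `Δ₀` sum to zero; hence for any regular `ξ`
and any `w` in the Weyl group `W = S₃`, among the labels `wα`, `α ∈ Δ₀`, of the edges issuing
from the vertex `w`, at least one pairs positively and at least one pairs negatively with `ξ`;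
and there is no Morse function on the GKM graph compatible with `ξ` for this axial function. -/
theorem a2_nonintegrable_no_morse_function
    {E : Type*} [NormedAddCommGroup E] [InnerProductSpace ℝ E] [FiniteDimensional ℝ E]
    (α₁ α₂ : E) (h11 : (inner ℝ α₁ α₁ : ℝ) = 2) (h22 : (inner ℝ α₂ α₂ : ℝ) = 2)
    (h12 : (inner ℝ α₁ α₂ : ℝ) = -1) :
    α₁ + α₂ + (-(α₁ + α₂)) = 0 ∧
      ∀ ξ : E,
        (∀ β ∈ ({α₁, -α₁, α₂, -α₂, α₁ + α₂, -(α₁ + α₂)} : Set E), (inner ℝ β ξ : ℝ) ≠ 0) →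
        (∀ w ∈ Subgroup.closure {sref α₁, sref α₂},
          (∃ α ∈ ({α₁, α₂, -(α₁ + α₂)} : Set E), 0 < (inner ℝ (w α) ξ : ℝ)) ∧
          (∃ α ∈ ({α₁, α₂, -(α₁ + α₂)} : Set E), (inner ℝ (w α) ξ : ℝ) < 0)) ∧
        ¬ ∃ f : (E ≃ₗᵢ[ℝ] E) → ℝ, ∀ w ∈ Subgroup.closure {sref α₁, sref α₂},
            ∀ α ∈ ({α₁, α₂, -(α₁ + α₂)} : Set E),
              0 < (inner ℝ (w α) ξ : ℝ) → f w < f (w * sref α) := by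
  have h21 : (inner ℝ α₂ α₁ : ℝ) = -1 := by rw [real_inner_comm]; exact h12
  have hγ2 : (inner ℝ (-(α₁ + α₂)) (-(α₁ + α₂)) : ℝ) = 2 := by
    simp only [inner_neg_neg, inner_add_left, inner_add_right, h11, h22, h12, h21]; ring
  have hs1 : ∀ x, sref α₁ x = x - (inner ℝ α₁ x : ℝ) • α₁ := sref_apply_two h11
  have hs2 : ∀ x, sref α₂ x = x - (inner ℝ α₂ x : ℝ) • α₂ := sref_apply_two h22
  have hs3 : ∀ x, sref (-(α₁ + α₂)) x
      = x - ((inner ℝ α₁ x : ℝ) + (inner ℝ α₂ x : ℝ)) • (α₁ + α₂) := by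
    intro x
    rw [sref_apply_two hγ2]
    simp only [inner_neg_left, inner_add_left]
    module
  have hmul : ∀ (u v : E ≃ₗᵢ[ℝ] E) (x : E), (u * v) x = u (v x) := fun u v x => rfl
  -- images of the roots under the generators
  have i11 : sref α₁ α₁ = -α₁ := by rw [hs1, h11]; module
  have i12 : sref α₁ α₂ = α₁ + α₂ := by rw [hs1, h12]; module
  have i1γ : sref α₁ (α₁ + α₂) = α₂ := by
    rw [hs1]; simp only [inner_add_right, h11, h12]; module
  have i21 : sref α₂ α₁ = α₁ + α₂ := by rw [hs2, h21]; module
  have i22 : sref α₂ α₂ = -α₂ := by rw [hs2, h22]; module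
  have i2γ : sref α₂ (α₁ + α₂) = α₁ := by
    rw [hs2]; simp only [inner_add_right, h21, h22]; module
  -- braid relations
  have hbraid : sref (-(α₁ + α₂)) = sref α₁ * sref α₂ * sref α₁ := by
    refine LinearIsometryEquiv.ext fun x => ?_
    rw [hs3, hmul, hmul, hs1 x, hs2, hs1]
    simp only [inner_sub_right, inner_smul_right, h11, h22, h12, h21]
    module
  have hbraid' : sref (-(α₁ + α₂)) = sref α₂ * sref α₁ * sref α₂ := by
    refine LinearIsometryEquiv.ext fun x => ?_
    rw [hs3, hmul, hmul, hs2 x, hs1, hs2]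
    simp only [inner_sub_right, inner_smul_right, h11, h22, h12, h21]
    module
  have hinvol : ∀ v : E, sref v * sref v = 1 :=
    fun v => LinearIsometryEquiv.ext fun x => by
      show sref v (sref v x) = x; exact Submodule.reflection_reflection (ℝ ∙ v)ᗮ x
  have cancel : ∀ (v : E) (g : E ≃ₗᵢ[ℝ] E), sref v * (sref v * g) = g := fun v g => by
    rw [← mul_assoc, hinvol, one_mul]
  have hm1 : sref α₁ ∈ Subgroup.closure {sref α₁, sref α₂} :=
    Subgroup.subset_closure (Or.inl rfl)
  have hm2 : sref α₂ ∈ Subgroup.closure {sref α₁, sref α₂} :=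
    Subgroup.subset_closure (Or.inr rfl)
  have hm3 : sref (-(α₁ + α₂)) ∈ Subgroup.closure {sref α₁, sref α₂} := by
    rw [hbraid]; exact mul_mem (mul_mem hm1 hm2) hm1
  have hinv : ∀ v : E, (sref v)⁻¹ = sref v := fun v => inv_eq_of_mul_eq_one_left (hinvol v)
  -- the root set is preserved
  have hR : ∀ w ∈ Subgroup.closure {sref α₁, sref α₂},
      ∀ x ∈ ({α₁, -α₁, α₂, -α₂, α₁ + α₂, -(α₁ + α₂)} : Set E),
        w x ∈ ({α₁, -α₁, α₂, -α₂, α₁ + α₂, -(α₁ + α₂)} : Set E) := by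
    intro w hw
    refine (Subgroup.closure_induction
      (p := fun g _ =>
        (∀ x ∈ ({α₁, -α₁, α₂, -α₂, α₁ + α₂, -(α₁ + α₂)} : Set E),
          g x ∈ ({α₁, -α₁, α₂, -α₂, α₁ + α₂, -(α₁ + α₂)} : Set E)) ∧
        (∀ x ∈ ({α₁, -α₁, α₂, -α₂, α₁ + α₂, -(α₁ + α₂)} : Set E),
          g⁻¹ x ∈ ({α₁, -α₁, α₂, -α₂, α₁ + α₂, -(α₁ + α₂)} : Set E)))
      ?_ ?_ ?_ ?_ hw).1
    · rintro g (rfl | rfl)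
      · have key : ∀ x ∈ ({α₁, -α₁, α₂, -α₂, α₁ + α₂, -(α₁ + α₂)} : Set E),
            sref α₁ x ∈ ({α₁, -α₁, α₂, -α₂, α₁ + α₂, -(α₁ + α₂)} : Set E) := by
          intro x hx
          simp only [Set.mem_insert_iff, Set.mem_singleton_iff] at hx ⊢
          rcases hx with rfl | rfl | rfl | rfl | rfl | rfl <;>
            simp [map_neg, i11, i12, i1γ]
        exact ⟨key, by rw [hinv]; exact key⟩
      · have key : ∀ x ∈ ({α₁, -α₁, α₂, -α₂, α₁ + α₂, -(α₁ + α₂)} : Set E),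
            sref α₂ x ∈ ({α₁, -α₁, α₂, -α₂, α₁ + α₂, -(α₁ + α₂)} : Set E) := by
          intro x hx
          simp only [Set.mem_insert_iff, Set.mem_singleton_iff] at hx ⊢
          rcases hx with rfl | rfl | rfl | rfl | rfl | rfl <;>
            simp [map_neg, i21, i22, i2γ]
        exact ⟨key, by rw [hinv]; exact key⟩
    · exact ⟨fun x hx => by simpa using hx, fun x hx => by simpa using hx⟩
    · rintro g h _ _ ⟨pg, pg'⟩ ⟨ph, ph'⟩
      refine ⟨fun x hx => ?_, fun x hx => ?_⟩
      · rw [hmul]; exact pg _ (ph _ hx)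
      · rw [mul_inv_rev, hmul]; exact ph' _ (pg' _ hx)
    · rintro g _ ⟨pg, pg'⟩
      exact ⟨pg', by simpa using pg⟩
  refine ⟨by abel, fun ξ hreg => ?_⟩
  constructor
  · intro w hw
    have n1 : (inner ℝ (w α₁) ξ : ℝ) ≠ 0 := hreg _ (hR w hw α₁ (by simp))
    have n2 : (inner ℝ (w α₂) ξ : ℝ) ≠ 0 := hreg _ (hR w hw α₂ (by simp))
    have n3 : (inner ℝ (w (-(α₁ + α₂))) ξ : ℝ) ≠ 0 :=
      hreg _ (hR w hw (-(α₁ + α₂)) (by simp))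
    have hvsum : w α₁ + w α₂ + w (-(α₁ + α₂)) = 0 := by
      rw [← map_add, ← map_add]
      have h0 : α₁ + α₂ + -(α₁ + α₂) = 0 := by abel
      rw [h0, map_zero]
    have hsum : (inner ℝ (w α₁) ξ : ℝ) + (inner ℝ (w α₂) ξ : ℝ)
        + (inner ℝ (w (-(α₁ + α₂))) ξ : ℝ) = 0 := by
      rw [← inner_add_left, ← inner_add_left, hvsum, inner_zero_left]
    constructor
    · by_contra hcon
      push_neg at hcon
      have q1 := hcon α₁ (by simp)
      have q2 := hcon α₂ (by simp)
      have q3 := hcon (-(α₁ + α₂)) (by simp)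
      have l1 := lt_of_le_of_ne q1 n1
      have l2 := lt_of_le_of_ne q2 n2
      have l3 := lt_of_le_of_ne q3 n3
      linarith
    · by_contra hcon
      push_neg at hcon
      have q1 := hcon α₁ (by simp)
      have q2 := hcon α₂ (by simp)
      have q3 := hcon (-(α₁ + α₂)) (by simp)
      have l1 := lt_of_le_of_ne q1 (Ne.symm n1)
      have l2 := lt_of_le_of_ne q2 (Ne.symm n2)
      have l3 := lt_of_le_of_ne q3 (Ne.symm n3)
      linarith
  · rintro ⟨f, hf⟩
    have na := hreg α₁ (by simp)
    have nb := hreg α₂ (by simp)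
    have nc := hreg (α₁ + α₂) (by simp)
    have hcab : (inner ℝ (α₁ + α₂) ξ : ℝ) = (inner ℝ α₁ ξ : ℝ) + (inner ℝ α₂ ξ : ℝ) :=
      inner_add_left _ _ _
    -- find `u` in the group with both `⟨u α₁, ξ⟩` and `⟨u α₂, ξ⟩` positive
    obtain ⟨u, hu, hA, hB⟩ : ∃ u ∈ Subgroup.closure {sref α₁, sref α₂},
        0 < (inner ℝ (u α₁) ξ : ℝ) ∧ 0 < (inner ℝ (u α₂) ξ : ℝ) := by
      rcases na.lt_or_gt with ha | ha
      · rcases nb.lt_or_gt with hb | hb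
        · -- a<0, b<0 : take s₁s₂s₁
          refine ⟨sref α₁ * sref α₂ * sref α₁, mul_mem (mul_mem hm1 hm2) hm1, ?_, ?_⟩
          · rw [hmul, hmul, i11, map_neg, i21, map_neg, i1γ, inner_neg_left]; linarith
          · rw [hmul, hmul, i12, i2γ, i11, inner_neg_left]; linarith
        · rcases nc.lt_or_gt with hc | hc
          · -- a<0, b>0, a+b<0 : take s₁s₂
            refine ⟨sref α₁ * sref α₂, mul_mem hm1 hm2, ?_, ?_⟩
            · rw [hmul, i21, i1γ]; linarith
            · rw [hmul, i22, map_neg, i12, inner_neg_left]; linarith [hcab ▸ hc]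
          · -- a<0, b>0, a+b>0 : take s₁
            refine ⟨sref α₁, hm1, ?_, ?_⟩
            · rw [i11, inner_neg_left]; linarith
            · rw [i12]; linarith [hcab ▸ hc]
      · rcases nb.lt_or_gt with hb | hb
        · rcases nc.lt_or_gt with hc | hc
          · -- a>0, b<0, a+b<0 : take s₂s₁
            refine ⟨sref α₂ * sref α₁, mul_mem hm2 hm1, ?_, ?_⟩
            · rw [hmul, i11, map_neg, i21, inner_neg_left]; linarith [hcab ▸ hc]
            · rw [hmul, i12, i2γ]; linarith
          · -- a>0, b<0, a+b>0 : take s₂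
            refine ⟨sref α₂, hm2, ?_, ?_⟩
            · rw [i21]; linarith [hcab ▸ hc]
            · rw [i22, inner_neg_left]; linarith
        · exact ⟨1, one_mem _, by simpa using ha, by simpa using hb⟩
    set A := (inner ℝ (u α₁) ξ : ℝ) with hAdef
    set B := (inner ℝ (u α₂) ξ : ℝ) with hBdef
    have huγ : (inner ℝ (u (α₁ + α₂)) ξ : ℝ) = A + B := by
      rw [map_add, inner_add_left]
    -- group identities for the two `s₃`-edges of the cycle
    have e1 : u * sref α₁ * sref α₂ * sref (-(α₁ + α₂)) = u * sref α₂ := by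
      rw [hbraid']
      simp only [mul_assoc, cancel]
    have e2 : u * sref α₂ * sref α₁ * sref (-(α₁ + α₂)) = u * sref α₁ := by
      rw [hbraid]
      simp only [mul_assoc, cancel]
    have mα₂ : α₂ ∈ ({α₁, α₂, -(α₁ + α₂)} : Set E) := by simp
    have mα₁ : α₁ ∈ ({α₁, α₂, -(α₁ + α₂)} : Set E) := by simp
    have mγ : -(α₁ + α₂) ∈ ({α₁, α₂, -(α₁ + α₂)} : Set E) := by simp
    -- the four edges of the ascending cycle  u s₁ → u s₁ s₂ → u s₂ → u s₂ s₁ → u s₁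
    have h1 : f (u * sref α₁) < f (u * sref α₁ * sref α₂) := by
      refine hf _ (mul_mem hu hm1) α₂ mα₂ ?_
      rw [hmul, i12, huγ]; linarith
    have h2 : f (u * sref α₁ * sref α₂) < f (u * sref α₂) := by
      have := hf _ (mul_mem (mul_mem hu hm1) hm2) (-(α₁ + α₂)) mγ ?_
      · rwa [e1] at this
      · rw [hmul, hmul, map_neg, i2γ, map_neg, i11]
        simpa using hA
    have h3 : f (u * sref α₂) < f (u * sref α₂ * sref α₁) := by
      refine hf _ (mul_mem hu hm2) α₁ mα₁ ?_
      rw [hmul, i21, huγ]; linarith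
    have h4 : f (u * sref α₂ * sref α₁) < f (u * sref α₁) := by
      have := hf _ (mul_mem (mul_mem hu hm2) hm1) (-(α₁ + α₂)) mγ ?_
      · rwa [e2] at this
      · rw [hmul, hmul, map_neg, i1γ, map_neg, i22]
        simpa using hB
    linarith
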